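/- Let (x^k, y^k, γ^k) be iterates of the two-block linearized ADMM (Algorithm 1): x^{k+1} is a global minimizer of f̄^k, y^{k+1} is a global minimizer of h̄^k, and γ^{k+1} = γ^k + β(Ax^{k+1} + By^{k+1}), under Assumption 1 with the parameter choice (★). Then for every k ≥ 1 and every y′_k ∈ ℝ^q with By′_k = −Ax^k (such y′_k exists since Im(A) ⊆ Im(B)), one has m_k ≥ g(x^k, y′_k) + f(x^k) + h(y′_k) + (1/2)‖y^k − y′_k‖², where m_k = L_β(x^k, y^k, γ^k) + C_m‖y^k − y^{k−1}‖². -/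

import Mathlib

open Matrix Filter
open scoped RealInnerProductSpace

noncomputable section

abbrev Vec (m : ℕ) := EuclideanSpace ℝ (Fin m)

def mv {m l : ℕ} (M : Matrix (Fin m) (Fin l) ℝ) (v : Vec l) : Vec m :=
  WithLp.toLp 2 (M.mulVec (WithLp.ofLp v))

def gradx {p q : ℕ} (g : Vec p → Vec q → ℝ) (x : Vec p) (y : Vec q) : Vec p :=
  gradient (fun x' => g x' y) x

def grady {p q : ℕ} (g : Vec p → Vec q → ℝ) (x : Vec p) (y : Vec q) : Vec q :=
  gradient (g x) y

def LipschitzDifferentiable {m : ℕ} (h : Vec m → ℝ) (L : ℝ) : Prop :=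
  Differentiable ℝ h ∧ ∀ y y' : Vec m, ‖gradient h y - gradient h y'‖ ≤ L * ‖y - y'‖

def LipschitzDifferentiable2 {p q : ℕ} (g : Vec p → Vec q → ℝ) (L : ℝ) : Prop :=
  (∀ y, Differentiable ℝ fun x => g x y) ∧ (∀ x, Differentiable ℝ (g x)) ∧
    ∀ x x' : Vec p, ∀ y y' : Vec q,
      Real.sqrt (‖gradx g x y - gradx g x' y'‖ ^ 2 + ‖grady g x y - grady g x' y'‖ ^ 2) ≤
        L * Real.sqrt (‖x - x'‖ ^ 2 + ‖y - y'‖ ^ 2)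

def Lagr {p q n : ℕ} (β : ℝ) (g : Vec p → Vec q → ℝ) (f : Vec p → ℝ) (h : Vec q → ℝ)
    (A : Matrix (Fin n) (Fin p) ℝ) (B : Matrix (Fin n) (Fin q) ℝ)
    (x : Vec p) (y : Vec q) (γ : Vec n) : ℝ :=
  g x y + f x + h y + ⟪γ, mv A x + mv B y⟫ + β / 2 * ‖mv A x + mv B y‖ ^ 2

def fbar {p q n : ℕ} (f : Vec p → ℝ) (g : Vec p → Vec q → ℝ)
    (A : Matrix (Fin n) (Fin p) ℝ) (B : Matrix (Fin n) (Fin q) ℝ) (β Lx : ℝ)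
    (xk : Vec p) (yk : Vec q) (γk : Vec n) (x : Vec p) : ℝ :=
  f x + ⟪γk, mv A x⟫ + Lx / 2 * ‖x - xk‖ ^ 2 +
    ⟪x - xk, gradx g xk yk + β • mv Aᵀ (mv A xk + mv B yk)⟫

def hbar {p q n : ℕ} (g : Vec p → Vec q → ℝ) (h : Vec q → ℝ)
    (A : Matrix (Fin n) (Fin p) ℝ) (B : Matrix (Fin n) (Fin q) ℝ) (β Ly : ℝ)
    (xk1 : Vec p) (yk : Vec q) (γk : Vec n) (y : Vec q) : ℝ :=
  ⟪γk, mv B y⟫ + Ly / 2 * ‖y - yk‖ ^ 2 + β / 2 * ‖mv A xk1 + mv B y‖ ^ 2 +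
    ⟪y - yk, grady g xk1 yk + gradient h yk⟫

def IsSmallestEigenvalue {m : ℕ} (M : Matrix (Fin m) (Fin m) ℝ) (lam : ℝ) : Prop :=
  (∃ v : Fin m → ℝ, v ≠ 0 ∧ M.mulVec v = lam • v) ∧
    ∀ μ : ℝ, (∃ v : Fin m → ℝ, v ≠ 0 ∧ M.mulVec v = μ • v) → lam ≤ μ

def IsLargestEigenvalue {m : ℕ} (M : Matrix (Fin m) (Fin m) ℝ) (lam : ℝ) : Prop :=
  (∃ v : Fin m → ℝ, v ≠ 0 ∧ M.mulVec v = lam • v) ∧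
    ∀ μ : ℝ, (∃ v : Fin m → ℝ, v ≠ 0 ∧ M.mulVec v = μ • v) → μ ≤ lam


-- ===== auxiliary lemmas =====

lemma mv_eq_lin {m l : ℕ} (M : Matrix (Fin m) (Fin l) ℝ) :
    mv M = ⇑(Matrix.toEuclideanLin M) :=
  funext fun v => (Matrix.toEuclideanLin_apply M v).symm

lemma mv_add {m l : ℕ} (M : Matrix (Fin m) (Fin l) ℝ) (a b : Vec l) :
    mv M (a + b) = mv M a + mv M b := by
  rw [mv_eq_lin]; exact map_add _ a b

lemma mv_smul {m l : ℕ} (M : Matrix (Fin m) (Fin l) ℝ) (r : ℝ) (a : Vec l) :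
    mv M (r • a) = r • mv M a := by
  rw [mv_eq_lin]; exact map_smul _ r a

lemma mv_sub {m l : ℕ} (M : Matrix (Fin m) (Fin l) ℝ) (a b : Vec l) :
    mv M (a - b) = mv M a - mv M b := by
  rw [mv_eq_lin]; exact map_sub _ a b

lemma inner_mv {m l : ℕ} (M : Matrix (Fin m) (Fin l) ℝ) (v : Vec m) (w : Vec l) :
    ⟪v, mv M w⟫ = ⟪mv Mᵀ v, w⟫ := by
  simp only [mv, EuclideanSpace.inner_eq_star_dotProduct, star_trivial, WithLp.ofLp_toLp]
  rw [dotProduct_comm, dotProduct_mulVec, Matrix.mulVec_transpose, dotProduct_comm]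

lemma final_arith (Lw Ly β lamB Cm D E Idd Iv Igw Igv Bn2 Gyk Hyk Gy' Hy' : ℝ)
    (hLw0 : 0 ≤ Lw) (hLypos : 0 < Ly) (hβpos : 0 < β) (hlamB : 0 < lamB) (hCmpos : 0 < Cm)
    (hD0 : 0 ≤ D) (hE0 : 0 ≤ E)
    (h2Cm : 2 * Cm = Ly + Lw ^ 2)
    (hLy' : Lw + Lw ^ 2 + 3 ≤ Ly)
    (hβ1 : Lw + Ly + 2 ≤ β * lamB)
    (hβ2 : 3 * (Lw ^ 2 + Ly ^ 2) ≤ β * (lamB * Cm))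
    (hdes : Gy' + Hy' ≤ Gyk + Hyk - Igw + Lw * E ^ 2)
    (hii : Igw - Iv = Igv)
    (hCS1 : -(Lw * (D * E)) ≤ Igv)
    (hCS2 : Idd ≤ D * E)
    (hBe : lamB * E ^ 2 ≤ Bn2) :
    Gy' + Hy' + 1 / 2 * E ^ 2 ≤ Gyk + Hyk + (-(Ly * Idd) - Iv) + β / 2 * Bn2 + Cm * D ^ 2 := by
  obtain ⟨t, htdef⟩ : ∃ t : ℝ, t = (Lw ^ 2 + Ly ^ 2) / (2 * Cm) := ⟨_, rfl⟩
  have htpos : 0 < t := by rw [htdef]; exact div_pos (by positivity) (by positivity)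
  have h2t : 2 * t * Cm = Lw ^ 2 + Ly ^ 2 := by
    rw [htdef]; field_simp
  have hy1 : 2 * t * (Lw * (D * E)) ≤ Lw ^ 2 * D ^ 2 + t ^ 2 * E ^ 2 := by
    nlinarith [sq_nonneg (Lw * D - t * E)]
  have hy2 : 2 * t * (Ly * (D * E)) ≤ Ly ^ 2 * D ^ 2 + t ^ 2 * E ^ 2 := by
    nlinarith [sq_nonneg (Ly * D - t * E)]
  have h2t' : (Lw ^ 2 + Ly ^ 2) * D ^ 2 = 2 * t * Cm * D ^ 2 := by rw [h2t]
  have hsum3 : 2 * t * (Lw * (D * E) + Ly * (D * E)) ≤ 2 * t * (Cm * D ^ 2 + t * E ^ 2) := by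
    nlinarith [hy1, hy2, h2t']
  have H : Lw * (D * E) + Ly * (D * E) ≤ Cm * D ^ 2 + t * E ^ 2 :=
    le_of_mul_le_mul_left hsum3 (by positivity)
  have h6t : 6 * t ≤ β * lamB := by
    rw [htdef, show 6 * ((Lw ^ 2 + Ly ^ 2) / (2 * Cm)) = 3 * (Lw ^ 2 + Ly ^ 2) / Cm from by
      field_simp; ring, div_le_iff₀ hCmpos]
    linarith [hβ2]
  have hLy3 : 3 * Lw + 2 ≤ Ly := by nlinarith [sq_nonneg (Lw - 1)]
  have Hcoef : Lw + t + 1 / 2 ≤ β * lamB / 2 := by linarith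
  have hq : (Lw + t + 1 / 2) * E ^ 2 ≤ (β * lamB / 2) * E ^ 2 :=
    mul_le_mul_of_nonneg_right Hcoef (sq_nonneg E)
  have hBe2 : β / 2 * (lamB * E ^ 2) ≤ β / 2 * Bn2 :=
    mul_le_mul_of_nonneg_left hBe (by positivity)
  have hCS2' : Ly * Idd ≤ Ly * (D * E) := mul_le_mul_of_nonneg_left hCS2 hLypos.le
  linarith [hdes, hii, hCS1, hCS2', hBe2, H, hq]


lemma hbar_expand {p q n : ℕ} (g : Vec p → Vec q → ℝ) (h : Vec q → ℝ)
    (A : Matrix (Fin n) (Fin p) ℝ) (B : Matrix (Fin n) (Fin q) ℝ) (β Ly : ℝ)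
    (xk1 : Vec p) (yk : Vec q) (γk : Vec n) (u z : Vec q) :
    hbar g h A B β Ly xk1 yk γk (u + z) = hbar g h A B β Ly xk1 yk γk u +
      ⟪mv Bᵀ γk + Ly • (u - yk) + β • mv Bᵀ (mv A xk1 + mv B u)
        + (grady g xk1 yk + gradient h yk), z⟫
      + Ly / 2 * ‖z‖ ^ 2 + β / 2 * ‖mv B z‖ ^ 2 := by
  have h1 : mv B (u + z) = mv B u + mv B z := mv_add ..
  have e1 : u + z - yk = (u - yk) + z := by abel
  have e2 : mv A xk1 + (mv B u + mv B z) = (mv A xk1 + mv B u) + mv B z := by abel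
  simp only [hbar, h1, e1, e2, norm_add_sq_real, inner_add_right, inner_add_left,
    real_inner_smul_left, inner_mv, mv_add]
  rw [real_inner_comm z (grady g xk1 yk), real_inner_comm z (gradient h yk)]
  ring

lemma argmin_hbar_grad_zero {p q n : ℕ} (g : Vec p → Vec q → ℝ) (h : Vec q → ℝ)
    (A : Matrix (Fin n) (Fin p) ℝ) (B : Matrix (Fin n) (Fin q) ℝ) {β Ly : ℝ}
    (xk1 : Vec p) (yk : Vec q) (γk : Vec n) (u : Vec q)
    (hLy : 0 < Ly) (hβ : 0 < β)
    (hmin : ∀ y', hbar g h A B β Ly xk1 yk γk u ≤ hbar g h A B β Ly xk1 yk γk y') :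
    mv Bᵀ γk + Ly • (u - yk) + β • mv Bᵀ (mv A xk1 + mv B u)
      + (grady g xk1 yk + gradient h yk) = 0 := by
  set G : Vec q := mv Bᵀ γk + Ly • (u - yk) + β • mv Bᵀ (mv A xk1 + mv B u)
      + (grady g xk1 yk + gradient h yk) with hGdef
  have step : ∀ z : Vec q, 0 ≤ ⟪G, z⟫ + Ly / 2 * ‖z‖ ^ 2 + β / 2 * ‖mv B z‖ ^ 2 := by
    intro z
    have := hmin (u + z)
    rw [hbar_expand] at this
    linarith
  by_contra hG
  have hG' : G ≠ 0 := hG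
  have hN : (0:ℝ) < ‖G‖ ^ 2 := pow_pos (norm_pos_iff.mpr hG') 2
  have hC : (0:ℝ) ≤ Ly / 2 * ‖G‖ ^ 2 + β / 2 * ‖mv B G‖ ^ 2 := by positivity
  have hCN : (0:ℝ) < Ly / 2 * ‖G‖ ^ 2 + β / 2 * ‖mv B G‖ ^ 2 + ‖G‖ ^ 2 := by linarith
  set t : ℝ := ‖G‖ ^ 2 / (Ly / 2 * ‖G‖ ^ 2 + β / 2 * ‖mv B G‖ ^ 2 + ‖G‖ ^ 2) with htdef
  have ht : 0 < t := div_pos hN hCN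
  have htCN : t * (Ly / 2 * ‖G‖ ^ 2 + β / 2 * ‖mv B G‖ ^ 2 + ‖G‖ ^ 2) = ‖G‖ ^ 2 := by
    rw [htdef]; field_simp
  have key := step ((-t) • G)
  have hz1 : ⟪G, (-t) • G⟫ = -(t * ‖G‖ ^ 2) := by
    rw [real_inner_smul_right, real_inner_self_eq_norm_sq]; ring
  have hz2 : ‖(-t) • G‖ ^ 2 = t ^ 2 * ‖G‖ ^ 2 := by
    rw [norm_smul, Real.norm_eq_abs, abs_neg, abs_of_pos ht]; ring
  have hz3 : ‖mv B ((-t) • G)‖ ^ 2 = t ^ 2 * ‖mv B G‖ ^ 2 := by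
    rw [mv_smul, norm_smul, Real.norm_eq_abs, abs_neg, abs_of_pos ht]; ring
  rw [hz1, hz2, hz3] at key
  have h8 : t * (t * (Ly / 2 * ‖G‖ ^ 2 + β / 2 * ‖mv B G‖ ^ 2 + ‖G‖ ^ 2)) = t * ‖G‖ ^ 2 := by
    rw [htCN]
  have h9 : 0 < t * (t * ‖G‖ ^ 2) := mul_pos ht (mul_pos ht hN)
  linarith [key, h8, h9]

lemma smallest_eig_bound {q n : ℕ} (B : Matrix (Fin n) (Fin q) ℝ) {lamB : ℝ}
    (hlamB : IsSmallestEigenvalue (Bᵀ * B) lamB) (e : Vec q) :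
    lamB * ‖e‖ ^ 2 ≤ ‖mv B e‖ ^ 2 := by
  set T : Vec q →ₗ[ℝ] Vec q := Matrix.toEuclideanLin (Bᵀ * B) with hT
  have hTapp : ∀ x : Vec q, T x = mv Bᵀ (mv B x) := by
    intro x
    rw [hT, Matrix.toEuclideanLin_apply]
    simp [mv, Matrix.mulVec_mulVec]
  have hquad : ∀ x : Vec q, ⟪T x, x⟫ = ‖mv B x‖ ^ 2 := by
    intro x
    rw [hTapp, real_inner_comm, inner_mv, Matrix.transpose_transpose,
      real_inner_self_eq_norm_sq]
  have hsym : T.IsSymmetric := by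
    intro x y
    rw [hTapp, hTapp, ← inner_mv B (mv B x) y, inner_mv Bᵀ x (mv B y),
      Matrix.transpose_transpose]
  obtain ⟨v, hv0, hveq⟩ := hlamB.1
  have hnt : Nontrivial (Vec q) := by
    refine ⟨⟨(WithLp.equiv 2 _).symm v, 0, ?_⟩⟩
    simpa using hv0
  have heig := hsym.hasEigenvalue_iInf_of_finiteDimensional
  set μ : ℝ := ⨅ x : { x : Vec q // x ≠ 0 }, RCLike.re ⟪T x, x⟫ / ‖(x : Vec q)‖ ^ 2 with hμ
  obtain ⟨w, hw⟩ := heig.exists_hasEigenvector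
  have hweq : T w = μ • w := by
    have := hw.apply_eq_smul
    simpa using this
  have hlam_le : lamB ≤ μ := by
    refine hlamB.2 μ ⟨w, ?_, ?_⟩
    · intro hcon
      exact hw.right (by ext i; exact congrFun hcon i)
    · have : mv (Bᵀ * B) w = μ • w := by rw [mv_eq_lin]; exact hweq
      simpa [mv] using congrArg WithLp.ofLp this
  by_cases he : e = 0
  · simp [he, mv, Matrix.mulVec_zero]
  · have hbdd : BddBelow (Set.range fun x : { x : Vec q // x ≠ 0 } =>
        RCLike.re ⟪T x, x⟫ / ‖(x : Vec q)‖ ^ 2) := by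
      refine ⟨0, ?_⟩
      rintro r ⟨x, rfl⟩
      have := hquad x
      simp only [RCLike.re_to_real, this]
      positivity
    have hle : μ ≤ RCLike.re ⟪T e, e⟫ / ‖e‖ ^ 2 := ciInf_le hbdd ⟨e, he⟩
    have hne : (0:ℝ) < ‖e‖ ^ 2 := pow_pos (norm_pos_iff.mpr he) 2
    rw [hquad] at hle
    simp only [RCLike.re_to_real] at hle
    have : lamB ≤ ‖mv B e‖ ^ 2 / ‖e‖ ^ 2 := le_trans hlam_le hle
    calc lamB * ‖e‖ ^ 2 ≤ (‖mv B e‖ ^ 2 / ‖e‖ ^ 2) * ‖e‖ ^ 2 :=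
          mul_le_mul_of_nonneg_right this (le_of_lt hne)
    _ = ‖mv B e‖ ^ 2 := by field_simp

lemma hasGradientAt_add' {q : ℕ} {f₁ f₂ : Vec q → ℝ} {u v : Vec q} {y : Vec q}
    (h1 : HasGradientAt f₁ u y) (h2 : HasGradientAt f₂ v y) :
    HasGradientAt (fun z => f₁ z + f₂ z) (u + v) y := by
  refine hasGradientAt_iff_hasFDerivAt.mpr ?_
  rw [map_add]
  exact h1.hasFDerivAt.add h2.hasFDerivAt

lemma descent_lemma {q : ℕ} (w : Vec q → ℝ) (gw : Vec q → Vec q) (L : ℝ) (hL : 0 ≤ L)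
    (hdiff : ∀ y, HasGradientAt w (gw y) y)
    (hlip : ∀ y y', ‖gw y - gw y'‖ ≤ L * ‖y - y'‖)
    (a b : Vec q) : w b ≤ w a + ⟪gw a, b - a⟫ + L * ‖b - a‖ ^ 2 := by
  set φ : Vec q → ℝ := fun y => w y - ⟪gw a, y⟫ with hφ
  have hinner : (fun y' : Vec q => ⟪gw a, y'⟫) =
      ⇑(InnerProductSpace.toDual ℝ (Vec q) (gw a)) :=
    funext fun y' => (InnerProductSpace.toDual_apply_apply).symm
  have hφd : ∀ y : Vec q, HasFDerivAt φ
      ((InnerProductSpace.toDual ℝ (Vec q) (gw y)) -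
        (InnerProductSpace.toDual ℝ (Vec q) (gw a))) y := by
    intro y
    refine HasFDerivAt.sub ((hdiff y).hasFDerivAt) ?_
    have hc := (InnerProductSpace.toDual ℝ (Vec q) (gw a)).hasFDerivAt (x := y)
    rw [← hinner] at hc
    exact hc
  have hseg : ∀ y ∈ segment ℝ a b, ‖y - a‖ ≤ ‖b - a‖ := by
    rintro y ⟨s, t, hs, ht, hst, rfl⟩
    have : s • a + t • b - a = t • (b - a) := by
      have hs1 : s = 1 - t := by linarith
      rw [hs1]; module
    rw [this, norm_smul, Real.norm_eq_abs, abs_of_nonneg ht]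
    nlinarith [norm_nonneg (b - a)]
  have hbound : ∀ y ∈ segment ℝ a b, ‖fderiv ℝ φ y‖ ≤ L * ‖b - a‖ := by
    intro y hy
    rw [(hφd y).fderiv, ← map_sub, LinearIsometryEquiv.norm_map]
    calc ‖gw y - gw a‖ ≤ L * ‖y - a‖ := hlip y a
    _ ≤ L * ‖b - a‖ := mul_le_mul_of_nonneg_left (hseg y hy) hL
  have hmvt := Convex.norm_image_sub_le_of_norm_fderiv_le
    (fun y _ => ((hφd y).differentiableAt))
    hbound (convex_segment a b) (left_mem_segment ℝ a b) (right_mem_segment ℝ a b)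
  have habs := le_abs_self (φ b - φ a)
  rw [Real.norm_eq_abs] at hmvt
  have hexp : φ b - φ a = w b - w a - ⟪gw a, b - a⟫ := by
    simp only [hφ, inner_sub_right]; ring
  have hsq : L * ‖b - a‖ * ‖b - a‖ = L * ‖b - a‖ ^ 2 := by ring
  linarith [hmvt, habs, hexp, hsq]


def RegularSubgradientAt {m : ℕ} (f : Vec m → ℝ) (x₀ v : Vec m) : Prop :=
  ∀ ε > 0, ∀ᶠ x in nhds x₀, f x₀ + ⟪v, x - x₀⟫ - ε * ‖x - x₀‖ ≤ f x

set_option maxHeartbeats 1000000 in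
theorem statement8 {p q n : ℕ}
    (A : Matrix (Fin n) (Fin p) ℝ) (B : Matrix (Fin n) (Fin q) ℝ)
    (g : Vec p → Vec q → ℝ) (f : Vec p → ℝ) (h : Vec q → ℝ)
    (Lg Lh Lx Ly β Cm LA lamB : ℝ)
    (x : ℕ → Vec p) (y : ℕ → Vec q) (γ : ℕ → Vec n)
    -- Assumption 1
    (hh : LipschitzDifferentiable h Lh)
    (hg : LipschitzDifferentiable2 g Lg)
    (hlb : ∃ c : ℝ, ∀ (x' : Vec p) (y' : Vec q),
      mv A x' + mv B y' = 0 → c ≤ g x' y' + f x' + h y')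
    (hcoercive : ∀ (u : ℕ → Vec p) (v : ℕ → Vec q),
      (∀ k, mv A (u k) + mv B (v k) = 0) →
      Tendsto (fun k => ‖v k‖) atTop atTop →
      Tendsto (fun k => g (u k) (v k) + f (u k) + h (v k)) atTop atTop)
    (hrank : B.rank = q)
    (himg : Set.range (mv A) ⊆ Set.range (mv B))
    -- extreme eigenvalues of AᵀA and BᵀB
    (hLA : IsLargestEigenvalue (Aᵀ * A) LA)
    (hlamB : IsSmallestEigenvalue (Bᵀ * B) lamB)
    (hLxpos : 0 < Lx) (hLypos : 0 < Ly) (hβpos : 0 < β)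
    -- parameter choice (★)
    (hLx : Lx ≥ Lg + β * LA + 6 * (Lg + Lh) ^ 2 + 1)
    (hLy : Ly ≥ (Lg + Lh) + (Lg + Lh) ^ 2 + 3)
    (hCm : Cm = (Ly + (Lg + Lh) ^ 2) / 2)
    (hβ : β ≥ max (max ((Lg + Lh + Ly + 2) / lamB)
        (3 * ((Lg + Lh) ^ 2 + Ly ^ 2) / (lamB * Cm))) (3 * Ly ^ 2 / lamB))
    -- Algorithm 1 iterations
    (hxmin : ∀ (k : ℕ) (x' : Vec p),
      fbar f g A B β Lx (x k) (y k) (γ k) (x (k + 1)) ≤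
        fbar f g A B β Lx (x k) (y k) (γ k) x')
    (hymin : ∀ (k : ℕ) (y' : Vec q),
      hbar g h A B β Ly (x (k + 1)) (y k) (γ k) (y (k + 1)) ≤
        hbar g h A B β Ly (x (k + 1)) (y k) (γ k) y')
    (hγup : ∀ k : ℕ, γ (k + 1) = γ k + β • (mv A (x (k + 1)) + mv B (y (k + 1)))) :
    ∀ k : ℕ, 1 ≤ k → ∀ y' : Vec q, mv B y' = -(mv A (x k)) →
      Lagr β g f h A B (x k) (y k) (γ k) + Cm * ‖y k - y (k - 1)‖ ^ 2 ≥
        g (x k) y' + f (x k) + h y' + 1 / 2 * ‖y k - y'‖ ^ 2 := by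
  -- basic setup
  obtain ⟨v0, hv00, hv0eq⟩ := hlamB.1
  set ve : Vec q := (WithLp.equiv 2 _).symm v0 with hve
  have hve0 : ve ≠ 0 := by simpa [hve] using hv00
  -- B is injective
  have hker : LinearMap.ker (Matrix.mulVecLin B) = ⊥ := by
    have h1 := LinearMap.finrank_range_add_finrank_ker (Matrix.mulVecLin B)
    have h2 : Module.finrank ℝ (LinearMap.range (Matrix.mulVecLin B)) = q := hrank
    have h3 : Module.finrank ℝ (Fin q → ℝ) = q := by simp
    rw [h2, h3] at h1
    have h4 : Module.finrank ℝ (LinearMap.ker (Matrix.mulVecLin B)) = 0 := by omega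
    exact Submodule.finrank_eq_zero.mp h4
  have hBinj : ∀ z : Vec q, mv B z = 0 → z = 0 := by
    intro z hz
    have hz' : WithLp.ofLp z ∈ LinearMap.ker (Matrix.mulVecLin B) := by
      rw [LinearMap.mem_ker]
      ext i
      exact congrFun (congrArg (fun (t : Vec n) (i : Fin n) => t i) hz) i
    rw [hker] at hz'
    simpa using hz'
  -- lamB > 0
  have hveq2 : mv (Bᵀ * B) ve = lamB • ve := by
    ext i; simpa [mv, hve] using congrFun hv0eq i
  have hmm : mv (Bᵀ * B) ve = mv Bᵀ (mv B ve) := by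
    simp [mv, Matrix.mulVec_mulVec]
  have he1 : ⟪ve, mv (Bᵀ * B) ve⟫ = lamB * ‖ve‖ ^ 2 := by
    rw [hveq2, real_inner_smul_right, real_inner_self_eq_norm_sq]
  have he2 : ⟪ve, mv (Bᵀ * B) ve⟫ = ‖mv B ve‖ ^ 2 := by
    rw [hmm, inner_mv Bᵀ, Matrix.transpose_transpose, real_inner_self_eq_norm_sq]
  have hBve : mv B ve ≠ 0 := fun hcon => hve0 (hBinj ve hcon)
  have hlamBpos : 0 < lamB := by
    have p1 : (0:ℝ) < ‖mv B ve‖ ^ 2 := pow_pos (norm_pos_iff.mpr hBve) 2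
    have p2 : (0:ℝ) < ‖ve‖ ^ 2 := pow_pos (norm_pos_iff.mpr hve0) 2
    nlinarith [he1, he2]
  -- Lh, Lg are nonnegative
  have hvenorm : (0:ℝ) < ‖ve‖ := norm_pos_iff.mpr hve0
  have hLh0 : 0 ≤ Lh := by
    have := hh.2 ve 0
    rw [sub_zero] at this
    nlinarith [norm_nonneg (gradient h ve - gradient h 0)]
  have hLg0 : 0 ≤ Lg := by
    have h0 := hg.2.2 0 0 ve 0
    have hs : Real.sqrt (‖(0:Vec p) - 0‖ ^ 2 + ‖ve - 0‖ ^ 2) = ‖ve‖ := by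
      simp [Real.sqrt_sq (norm_nonneg ve)]
    rw [hs] at h0
    nlinarith [Real.sqrt_nonneg (‖gradx g 0 ve - gradx g 0 0‖ ^ 2 +
      ‖grady g 0 ve - grady g 0 0‖ ^ 2), h0]
  -- Lipschitz bound for grady in the y variable
  have hglip : ∀ (a : Vec p) (y1 y2 : Vec q),
      ‖grady g a y1 - grady g a y2‖ ≤ Lg * ‖y1 - y2‖ := by
    intro a y1 y2
    have h0 := hg.2.2 a a y1 y2
    have hs : Real.sqrt (‖a - a‖ ^ 2 + ‖y1 - y2‖ ^ 2) = ‖y1 - y2‖ := by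
      simp [Real.sqrt_sq (norm_nonneg (y1 - y2))]
    rw [hs] at h0
    have l0 : ‖grady g a y1 - grady g a y2‖ ^ 2 ≤
        ‖gradx g a y1 - gradx g a y2‖ ^ 2 + ‖grady g a y1 - grady g a y2‖ ^ 2 :=
      le_add_of_nonneg_left (sq_nonneg _)
    have l1 := Real.sqrt_le_sqrt l0
    rw [Real.sqrt_sq (norm_nonneg _)] at l1
    linarith
  -- main proof
  intro k hk y' hy'
  obtain ⟨j, rfl⟩ : ∃ j, k = j + 1 := ⟨k - 1, (Nat.succ_pred_eq_of_pos hk).symm⟩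
  simp only [Nat.add_sub_cancel]
  set Lw : ℝ := Lg + Lh with hLw
  have hLw0 : 0 ≤ Lw := by positivity
  set xk : Vec p := x (j + 1) with hxk
  set yk : Vec q := y (j + 1) with hyk
  set yj : Vec q := y j with hyj
  set e : Vec q := yk - y' with hee
  set d : Vec q := yk - yj with hdd
  set gwk : Vec q := grady g xk yk + gradient h yk with hgwk
  set vj : Vec q := grady g xk yj + gradient h yj with hvj
  -- gradient of w := g xk · + h ·
  have hgrad : ∀ y0 : Vec q, HasGradientAt (fun z => g xk z + h z)
      (grady g xk y0 + gradient h y0) y0 := fun y0 =>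
    hasGradientAt_add' ((hg.2.1 xk y0).hasGradientAt) ((hh.1 y0).hasGradientAt)
  have hgwlip : ∀ y1 y2 : Vec q,
      ‖(grady g xk y1 + gradient h y1) - (grady g xk y2 + gradient h y2)‖
        ≤ Lw * ‖y1 - y2‖ := by
    intro y1 y2
    have hre : (grady g xk y1 + gradient h y1) - (grady g xk y2 + gradient h y2)
        = (grady g xk y1 - grady g xk y2) + (gradient h y1 - gradient h y2) := by abel
    rw [hre]
    calc ‖(grady g xk y1 - grady g xk y2) + (gradient h y1 - gradient h y2)‖
        ≤ ‖grady g xk y1 - grady g xk y2‖ + ‖gradient h y1 - gradient h y2‖ :=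
          norm_add_le _ _
    _ ≤ Lg * ‖y1 - y2‖ + Lh * ‖y1 - y2‖ := add_le_add (hglip xk y1 y2) (hh.2 y1 y2)
    _ = Lw * ‖y1 - y2‖ := by rw [hLw]; ring
  -- descent inequality
  have hdes := descent_lemma (fun z => g xk z + h z)
    (fun y0 => grady g xk y0 + gradient h y0) Lw hLw0 hgrad hgwlip yk y'
  -- first-order optimality of the y-update at step j
  have hG0 := argmin_hbar_grad_zero g h A B xk yj (γ j) yk hLypos hβpos (hymin j)
  -- expression for Bᵀ γ (j+1)
  have hγ : mv Bᵀ (γ (j + 1)) = mv Bᵀ (γ j) + β • mv Bᵀ (mv A xk + mv B yk) := by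
    rw [hγup j, mv_add, mv_smul]
  have hBγ : mv Bᵀ (γ (j + 1)) = -(Ly • d) - vj := by
    rw [hγ]
    linear_combination (norm := module) hG0
  -- constraint rewriting
  have hABBe : mv A xk + mv B yk = mv B e := by
    rw [hee, mv_sub, hy']
    abel
  have hinnerγ : ⟪γ (j + 1), mv A xk + mv B yk⟫ = -(Ly * ⟪d, e⟫) - ⟪vj, e⟫ := by
    rw [hABBe, inner_mv, hBγ, inner_sub_left, inner_neg_left, real_inner_smul_left]
  -- norms
  set D : ℝ := ‖d‖ with hD
  set E : ℝ := ‖e‖ with hE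
  have hD0 : 0 ≤ D := norm_nonneg _
  have hE0 : 0 ≤ E := norm_nonneg _
  -- Cauchy-Schwarz facts
  have hlipkd : ‖gwk - vj‖ ≤ Lw * D := by
    have := hgwlip yk yj
    simpa [hgwk, hvj, hD, hdd] using this
  have hCS1 : -(Lw * (D * E)) ≤ ⟪gwk - vj, e⟫ := by
    have h1 : |⟪gwk - vj, e⟫| ≤ ‖gwk - vj‖ * E := abs_real_inner_le_norm _ _
    have h2 : ‖gwk - vj‖ * E ≤ Lw * D * E := mul_le_mul_of_nonneg_right hlipkd hE0
    have h3 := neg_abs_le ⟪gwk - vj, e⟫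
    nlinarith [h1, h2, h3]
  have hCS2 : Ly * ⟪d, e⟫ ≤ Ly * (D * E) :=
    mul_le_mul_of_nonneg_left (real_inner_le_norm d e) (le_of_lt hLypos)
  -- eigenvalue bound
  have hBe : lamB * E ^ 2 ≤ ‖mv B e‖ ^ 2 := smallest_eig_bound B hlamB e
  have hBe2 : β / 2 * (lamB * E ^ 2) ≤ β / 2 * ‖mv B e‖ ^ 2 :=
    mul_le_mul_of_nonneg_left hBe (by positivity)
  have hBe : lamB * E ^ 2 ≤ ‖mv B e‖ ^ 2 := smallest_eig_bound B hlamB e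
  -- parameter bounds
  have hCmpos : 0 < Cm := by rw [hCm]; positivity
  have hβ1 : (Lg + Lh + Ly + 2) / lamB ≤ β :=
    le_trans (le_max_left _ _) (le_trans (le_max_left _ _) hβ)
  have hβ2 : 3 * ((Lg + Lh) ^ 2 + Ly ^ 2) / (lamB * Cm) ≤ β :=
    le_trans (le_max_right _ _) (le_trans (le_max_left _ _) hβ)
  have hβ1' : Lw + Ly + 2 ≤ β * lamB := by
    have := (div_le_iff₀ hlamBpos).mp hβ1
    rw [hLw]
    linarith
  have hβ2' : 3 * (Lw ^ 2 + Ly ^ 2) ≤ β * (lamB * Cm) := by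
    have := (div_le_iff₀ (by positivity : 0 < lamB * Cm)).mp hβ2
    rw [hLw]
    linarith
  have h2Cm : 2 * Cm = Ly + Lw ^ 2 := by rw [hCm, hLw]; ring
  have hLy'' : Lw + Lw ^ 2 + 3 ≤ Ly := by rw [hLw]; linarith [hLy]
  -- descent rewriting
  have hy'e : y' - yk = -e := by rw [hee]; abel
  have hdes'' : g xk y' + h y' ≤ g xk yk + h yk - ⟪gwk, e⟫ + Lw * E ^ 2 := by
    have h1 : ⟪grady g xk yk + gradient h yk, y' - yk⟫ = -⟪gwk, e⟫ := by
      rw [hy'e, inner_neg_right, hgwk]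
    have h2 : ‖y' - yk‖ = E := by rw [hy'e, norm_neg, hE]
    have h3 := hdes
    rw [h1, h2] at h3
    linarith
  have hii : ⟪gwk, e⟫ - ⟪vj, e⟫ = ⟪gwk - vj, e⟫ := (inner_sub_left _ _ _).symm
  have hCS2 : ⟪d, e⟫ ≤ D * E := real_inner_le_norm d e
  have hfin := final_arith Lw Ly β lamB Cm D E (⟪d, e⟫) (⟪vj, e⟫) (⟪gwk, e⟫)
    (⟪gwk - vj, e⟫) (‖mv B e‖ ^ 2) (g xk yk) (h yk) (g xk y') (h y')
    hLw0 hLypos hβpos hlamBpos hCmpos hD0 hE0 h2Cm hLy'' hβ1' hβ2'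
    hdes'' hii hCS1 hCS2 hBe
  -- final assembly
  rw [ge_iff_le]
  simp only [Lagr]
  rw [hinnerγ, hABBe]
  linarith [hfin]
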